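/- Let V be C¹ and homogeneous of degree −α, α ∈ (0,2), let V_min > 0 be the minimum of V on the unit sphere, and let x = r s (polar decomposition, r = |x|, s = x/|x|) be a C² zero-energy solution of ẍ = ∇V(x) on (a,b) with ṙ > 0 on (a,b]. Then the function φ(t) = ½ r(t)² ṙ(t)² − V_min r(t)^{2α*}, with α* = (2−α)/2, is nondecreasing on (a,b); indeed φ'(t) = 2α* r(t)^{1−α} (V(s(t)) − V_min) ṙ(t) ≥ 0. -/

import Mathlib

theorem stmt_7 (α Vmin a b : ℝ) (hα : α ∈ Set.Ioo (0 : ℝ) 2) (hVmin : 0 < Vmin)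
    (hab : a < b)
    (r r' r'' q W : ℝ → ℝ)
    (hr : ∀ t ∈ Set.Ioo a b, HasDerivAt r (r' t) t)
    (hr' : ∀ t ∈ Set.Ioo a b, HasDerivAt r' (r'' t) t)
    (hrpos : ∀ t ∈ Set.Ioo a b, 0 < r t)
    (hr'pos : ∀ t ∈ Set.Ioo a b, 0 < r' t)
    (hq : ∀ t ∈ Set.Ioo a b, 0 ≤ q t)
    (hode : ∀ t ∈ Set.Ioo a b,
      r'' t = -(α / 2) * (r' t) ^ 2 / r t + ((2 - α) / 2) * q t * r t)
    (henergy : ∀ t ∈ Set.Ioo a b,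
      (r' t) ^ 2 / 2 + (r t) ^ 2 * q t / 2 = W t / (r t) ^ α)
    (hW : ∀ t ∈ Set.Ioo a b, Vmin ≤ W t) :
    (∀ t ∈ Set.Ioo a b,
      HasDerivAt (fun τ => (r τ) ^ 2 * (r' τ) ^ 2 / 2 -
          Vmin * (r τ) ^ (2 * ((2 - α) / 2)))
        (2 * ((2 - α) / 2) * (r t) ^ (1 - α) * (W t - Vmin) * (r' t)) t ∧
      0 ≤ 2 * ((2 - α) / 2) * (r t) ^ (1 - α) * (W t - Vmin) * (r' t)) ∧
    MonotoneOn (fun τ => (r τ) ^ 2 * (r' τ) ^ 2 / 2 -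
        Vmin * (r τ) ^ (2 * ((2 - α) / 2))) (Set.Ioo a b) := by
  obtain ⟨hα0, hα2⟩ := hα
  have key : ∀ t ∈ Set.Ioo a b,
      HasDerivAt (fun τ => (r τ) ^ 2 * (r' τ) ^ 2 / 2 -
          Vmin * (r τ) ^ (2 * ((2 - α) / 2)))
        (2 * ((2 - α) / 2) * (r t) ^ (1 - α) * (W t - Vmin) * (r' t)) t ∧
      0 ≤ 2 * ((2 - α) / 2) * (r t) ^ (1 - α) * (W t - Vmin) * (r' t) := by
    intro t ht
    have hrt := hrpos t ht
    have hrne : r t ≠ 0 := hrt.ne'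
    have hrα : (0:ℝ) < r t ^ α := Real.rpow_pos_of_pos hrt α
    have hE : W t = (r' t ^ 2 / 2 + r t ^ 2 * q t / 2) * r t ^ α := by
      have h := henergy t ht
      field_simp [hrα.ne'] at h
      linarith
    have h1α : r t ^ (1 - α) * r t ^ α = r t := by
      rw [← Real.rpow_add hrt]; simp
    have hc1 : 2 * ((2 - α) / 2) - 1 = 1 - α := by ring
    have hd1 : HasDerivAt (fun τ => (r τ) ^ 2 * (r' τ) ^ 2 / 2)
        ((2 * r t ^ 1 * r' t * r' t ^ 2 + r t ^ 2 * (2 * r' t ^ 1 * r'' t)) / 2) t :=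
      (((hr t ht).pow 2).mul ((hr' t ht).pow 2)).div_const 2
    have hd2 : HasDerivAt (fun τ => Vmin * (r τ) ^ (2 * ((2 - α) / 2)))
        (Vmin * (r' t * (2 * ((2 - α) / 2)) * r t ^ (1 - α))) t := by
      have := ((hr t ht).rpow_const (p := 2 * ((2 - α) / 2)) (Or.inl hrne)).const_mul Vmin
      rwa [hc1] at this
    have hd := hd1.sub hd2
    constructor
    · refine hd.congr_deriv ?_
      symm
      rw [hode t ht, hE]
      field_simp
      linear_combination ((2 - α) * (r' t * r t ^ 2 * q t + r' t ^ 3)) * h1α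
    · have h1 : (0:ℝ) < r t ^ (1 - α) := Real.rpow_pos_of_pos hrt _
      have h2 := hW t ht
      have h3 := (hr'pos t ht).le
      have h4 : (0:ℝ) ≤ W t - Vmin := by linarith
      have h5 : (0:ℝ) ≤ 2 * ((2 - α) / 2) := by linarith
      exact mul_nonneg (mul_nonneg (mul_nonneg h5 h1.le) h4) h3
  refine ⟨key, ?_⟩
  have hsub : Set.Ioo a b ⊆ Set.Ioo a b := le_refl _
  apply monotoneOn_of_deriv_nonneg (convex_Ioo a b)
  · exact fun t ht => (key t ht).1.continuousAt.continuousWithinAt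
  · rw [interior_Ioo]
    exact fun t ht => (key t ht).1.differentiableAt.differentiableWithinAt
  · rw [interior_Ioo]
    intro t ht
    rw [(key t ht).1.deriv]
    exact (key t ht).2
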